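/- For every nonzero real number φ, the limit as ε → 0⁺ of ∫₀^∞ e^{(i φ − ε) r} log r dr exists and equals (γ + Log(−i φ))/(i φ), where γ is the Euler–Mascheroni constant and Log is the principal branch of the complex logarithm. -/

import Mathlib

open MeasureTheory Complex Filter Set Metric

section stmt2aux
-- log bound
lemma aux_log_bound {r : ℝ} (hr : 0 < r) : |Real.log r| ≤ 2 * r ^ (-(1/2) : ℝ) + r := by
  rcases le_or_gt 1 r with h | h
  · rw [_root_.abs_of_nonneg (Real.log_nonneg h)]
    have h1 : Real.log r ≤ r - 1 := Real.log_le_sub_one_of_pos hr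
    have h2 : (0:ℝ) ≤ 2 * r ^ (-(1/2) : ℝ) := by positivity
    linarith
  · rw [abs_of_nonpos (Real.log_nonpos hr.le h.le)]
    have h1 : Real.log (r ^ (-(1/2) : ℝ)) ≤ r ^ (-(1/2) : ℝ) - 1 :=
      Real.log_le_sub_one_of_pos (by positivity)
    rw [Real.log_rpow hr] at h1
    nlinarith [hr.le]

lemma aux_int {b : ℝ} (hb : 0 < b) {s : ℝ} (hs : 0 ≤ s) :
    IntegrableOn (fun r : ℝ => r ^ s * Real.exp (-b * r) * |Real.log r|) (Ioi 0) := by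
  have hg : IntegrableOn
      (fun r : ℝ => 2 * (r ^ (s - 1/2) * Real.exp (-b * r)) + r ^ (s + 1) * Real.exp (-b * r))
      (Ioi 0) := by
    have h1 : IntegrableOn (fun r : ℝ => r ^ (s - 1/2) * Real.exp (-b * r)) (Ioi 0) := by
      have := integrableOn_rpow_mul_exp_neg_mul_rpow (s := s - 1/2) (p := 1) (b := b)
        (by linarith) one_pos hb
      simpa [Real.rpow_one] using this
    have h2 : IntegrableOn (fun r : ℝ => r ^ (s + 1) * Real.exp (-b * r)) (Ioi 0) := by
      have := integrableOn_rpow_mul_exp_neg_mul_rpow (s := s + 1) (p := 1) (b := b)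
        (by linarith) one_pos hb
      simpa [Real.rpow_one] using this
    exact (h1.const_mul 2).add h2
  refine hg.mono' ?_ ?_
  · apply Measurable.aestronglyMeasurable
    exact ((measurable_id.pow_const s).mul
      ((Real.measurable_exp).comp (measurable_const.mul measurable_id))).mul
      Real.measurable_log.abs
  · rw [ae_restrict_iff' measurableSet_Ioi]
    filter_upwards with r hr
    have hr' : (0:ℝ) < r := hr
    have h0 : (0:ℝ) ≤ r ^ s * Real.exp (-b * r) * |Real.log r| := by positivity
    rw [Real.norm_eq_abs, _root_.abs_of_nonneg h0]
    have hlog := aux_log_bound hr'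
    have hexp : (0:ℝ) < Real.exp (-b * r) := Real.exp_pos _
    have h1 : r ^ s * Real.exp (-b * r) * |Real.log r|
        ≤ r ^ s * Real.exp (-b * r) * (2 * r ^ (-(1/2) : ℝ) + r) := by
      apply mul_le_mul_of_nonneg_left hlog (by positivity)
    refine h1.trans (le_of_eq ?_)
    have e1 : r ^ s * r ^ (-(1/2) : ℝ) = r ^ (s - 1/2) := by
      rw [← Real.rpow_add hr']; ring_nf
    have e2 : r ^ s * r = r ^ (s + 1) := (Real.rpow_add_one hr'.ne' s).symm
    calc r ^ s * Real.exp (-b * r) * (2 * r ^ (-(1/2) : ℝ) + r)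
        = 2 * (r ^ s * r ^ (-(1/2) : ℝ) * Real.exp (-b * r)) + r ^ s * r * Real.exp (-b * r) := by
          ring
      _ = 2 * (r ^ (s - 1/2) * Real.exp (-b * r)) + r ^ (s + 1) * Real.exp (-b * r) := by
          rw [e1, e2]

lemma aux_meas (z : ℂ) : AEStronglyMeasurable
    (fun r : ℝ => Complex.exp (z * r) * (Real.log r : ℂ))
    (volume.restrict (Ioi 0)) := by
  apply Measurable.aestronglyMeasurable
  exact (Complex.measurable_exp.comp
    (measurable_const.mul Complex.measurable_ofReal)).mul
    (Complex.measurable_ofReal.comp Real.measurable_log)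

lemma aux_norm (z : ℂ) {r : ℝ} :
    ‖Complex.exp (z * r) * (Real.log r : ℂ)‖ = Real.exp (z.re * r) * |Real.log r| := by
  rw [norm_mul, Complex.norm_exp, Complex.norm_real, Real.norm_eq_abs]
  congr 2
  simp [Complex.mul_re]

lemma F_integrable {z : ℂ} (hz : z.re < 0) :
    IntegrableOn (fun r : ℝ => Complex.exp (z * r) * (Real.log r : ℂ)) (Ioi 0) := by
  have hg := aux_int (b := -z.re) (by linarith) (s := 0) le_rfl
  have hg' : IntegrableOn (fun r : ℝ => Real.exp (z.re * r) * |Real.log r|) (Ioi 0) := by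
    apply hg.congr_fun (fun r hr => ?_) measurableSet_Ioi
    rw [Real.rpow_zero, one_mul, neg_neg]
  refine hg'.mono' (aux_meas z) ?_
  rw [ae_restrict_iff' measurableSet_Ioi]
  filter_upwards with r hr
  rw [aux_norm]

lemma lemA : (∫ t : ℝ in Ioi 0, Complex.exp (-t : ℂ) * (Real.log t : ℂ))
    = -(Real.eulerMascheroniConstant : ℂ) := by
  have h1 := Complex.hasDerivAt_GammaIntegral (s := 1) (by norm_num)
  have h2 : Complex.GammaIntegral =ᶠ[nhds (1 : ℂ)] Complex.Gamma := by
    have hopen : IsOpen {s : ℂ | 0 < s.re} := isOpen_lt continuous_const continuous_re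
    filter_upwards [hopen.mem_nhds (by norm_num : (0:ℝ) < (1:ℂ).re)] with s hs
    exact (Complex.Gamma_eq_integral hs).symm
  have h3 : HasDerivAt Complex.Gamma
      (∫ t : ℝ in Ioi 0, (t : ℂ) ^ ((1 : ℂ) - 1) * (Real.log t * Real.exp (-t))) 1 :=
    h1.congr_of_eventuallyEq h2.symm
  have h4 := Complex.hasDerivAt_Gamma_one
  have h5 := h3.unique h4
  rw [← h5]
  apply setIntegral_congr_fun measurableSet_Ioi
  intro t ht
  simp only [sub_self, Complex.cpow_zero, one_mul]
  rw [← Complex.ofReal_neg, ← Complex.ofReal_exp]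
  ring

lemma lemB {x : ℝ} (hx : x < 0) :
    (∫ r : ℝ in Ioi 0, Complex.exp ((x : ℂ) * r) * (Real.log r : ℂ))
      = ((Real.eulerMascheroniConstant : ℂ) + Complex.log (-(x : ℂ))) / (x : ℂ) := by
  set s : ℝ := -x with hs_def
  have hs : 0 < s := by simp [hs_def]; linarith
  set f : ℝ → ℂ := fun t => (Real.exp (-t) : ℂ) * ((Real.log t : ℂ) - (Real.log s : ℂ)) with hf
  have key : ∀ r ∈ Ioi (0:ℝ),
      Complex.exp ((x : ℂ) * r) * (Real.log r : ℂ) = f (s * r) := by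
    intro r hr
    have hr' : (0:ℝ) < r := hr
    simp only [hf]
    rw [Real.log_mul hs.ne' hr'.ne']
    have : ((x : ℂ) * r) = ((-(s * r) : ℝ) : ℂ) := by push_cast [hs_def]; ring
    rw [this, ← Complex.ofReal_exp]
    push_cast
    ring
  rw [setIntegral_congr_fun measurableSet_Ioi key]
  have hcomp := integral_comp_mul_left_Ioi f 0 hs
  rw [mul_zero] at hcomp
  rw [hcomp]
  -- compute ∫ f
  have h1 : IntegrableOn (fun t : ℝ => (Real.exp (-t) : ℂ) * (Real.log t : ℂ)) (Ioi 0) := by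
    apply (F_integrable (z := -1) (by norm_num)).congr_fun ?_ measurableSet_Ioi
    intro t ht
    show Complex.exp ((-1 : ℂ) * t) * _ = _
    rw [show ((-1 : ℂ) * (t:ℂ)) = ((-t : ℝ) : ℂ) by push_cast; ring, ← Complex.ofReal_exp]
  have hexp : IntegrableOn (fun t : ℝ => (Real.exp (-t) : ℂ)) (Ioi 0) := by
    have := (exp_neg_integrableOn_Ioi 0 (one_pos)).ofReal (𝕜 := ℂ)
    apply MeasureTheory.IntegrableOn.congr_fun this ?_ measurableSet_Ioi
    intro t ht
    norm_num
  have h2 : IntegrableOn (fun t : ℝ => (Real.exp (-t) : ℂ) * (Real.log s : ℂ)) (Ioi 0) :=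
    hexp.mul_const _
  have hfsplit : ∀ t : ℝ, f t = (Real.exp (-t) : ℂ) * (Real.log t : ℂ)
      - (Real.exp (-t) : ℂ) * (Real.log s : ℂ) := by
    intro t; simp only [hf]; ring
  have hint : (∫ t : ℝ in Ioi 0, f t)
      = (∫ t : ℝ in Ioi 0, (Real.exp (-t) : ℂ) * (Real.log t : ℂ))
        - ∫ t : ℝ in Ioi 0, (Real.exp (-t) : ℂ) * (Real.log s : ℂ) := by
    simp_rw [hfsplit]
    exact integral_sub h1 h2
  have hv1 : (∫ t : ℝ in Ioi 0, (Real.exp (-t) : ℂ) * (Real.log t : ℂ))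
      = -(Real.eulerMascheroniConstant : ℂ) := by
    rw [← lemA]
    apply setIntegral_congr_fun measurableSet_Ioi
    intro t ht
    show _ = Complex.exp (-(t:ℂ)) * _
    rw [← Complex.ofReal_neg, ← Complex.ofReal_exp]
  have hv2 : (∫ t : ℝ in Ioi 0, (Real.exp (-t) : ℂ) * (Real.log s : ℂ))
      = (Real.log s : ℂ) := by
    rw [integral_mul_const]
    have : (∫ t : ℝ in Ioi 0, (Real.exp (-t) : ℂ)) = ((∫ t : ℝ in Ioi 0, Real.exp (-t) : ℝ) : ℂ) := by
      exact integral_ofReal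
    rw [this, integral_exp_neg_Ioi_zero]
    norm_num
  have hlog : Complex.log (-(x : ℂ)) = (Real.log s : ℂ) := by
    rw [show -(x : ℂ) = ((s : ℝ) : ℂ) by push_cast [hs_def]; ring]
    exact (Complex.ofReal_log hs.le).symm
  have hxs : (x : ℂ) = -(s : ℂ) := by push_cast [hs_def]; ring
  rw [hint, hv1, hv2, hlog, hxs, Complex.real_smul, Complex.ofReal_inv]
  have hsne : (s : ℂ) ≠ 0 := by exact_mod_cast hs.ne'
  calc ((s:ℂ))⁻¹ * (-(Real.eulerMascheroniConstant:ℂ) - (Real.log s : ℂ))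
      = -(((Real.eulerMascheroniConstant:ℂ) + (Real.log s : ℂ)) * ((s:ℂ))⁻¹) := by ring
    _ = ((Real.eulerMascheroniConstant:ℂ) + (Real.log s : ℂ)) / (-(s:ℂ)) := by
        rw [div_neg, div_eq_mul_inv]

lemma F_diff {z₀ : ℂ} (hz : z₀.re < 0) :
    DifferentiableAt ℂ
      (fun z : ℂ => ∫ r : ℝ in Ioi 0, Complex.exp (z * r) * (Real.log r : ℂ)) z₀ := by
  set δ : ℝ := -z₀.re / 2 with hδ_def
  have hδ : 0 < δ := by simp [hδ_def]; linarith
  have hre : ∀ z ∈ ball z₀ δ, z.re ≤ -δ := by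
    intro z hz'
    have h1 : |(z - z₀).re| ≤ ‖z - z₀‖ := Complex.abs_re_le_norm _
    have h2 : ‖z - z₀‖ < δ := by
      rwa [mem_ball, Complex.dist_eq] at hz'
    have h3 : (z - z₀).re = z.re - z₀.re := by simp
    have := (abs_le.mp (h1.trans h2.le)).2
    rw [h3] at this
    have : z.re ≤ z₀.re + δ := by linarith
    simp only [hδ_def] at *
    linarith
  have hbound_int : IntegrableOn
      (fun r : ℝ => r ^ (1:ℝ) * Real.exp (-δ * r) * |Real.log r|) (Ioi 0) :=
    aux_int hδ zero_le_one
  have key := hasDerivAt_integral_of_dominated_loc_of_deriv_le (μ := volume.restrict (Ioi 0))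
    (F := fun (z : ℂ) (r : ℝ) => Complex.exp (z * r) * (Real.log r : ℂ))
    (F' := fun (z : ℂ) (r : ℝ) => Complex.exp (z * r) * r * (Real.log r : ℂ))
    (x₀ := z₀)
    (bound := fun r : ℝ => r ^ (1:ℝ) * Real.exp (-δ * r) * |Real.log r|)
    (ball_mem_nhds z₀ hδ)
    (Eventually.of_forall fun z => aux_meas z)
    (F_integrable hz)
    ?_ ?_ hbound_int ?_
  · exact key.2.differentiableAt
  · -- measurability of F' z₀
    apply Measurable.aestronglyMeasurable
    exact ((Complex.measurable_exp.comp
      (measurable_const.mul Complex.measurable_ofReal)).mul Complex.measurable_ofReal).mul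
      (Complex.measurable_ofReal.comp Real.measurable_log)
  · -- bound
    rw [ae_restrict_iff' measurableSet_Ioi]
    filter_upwards with r hr
    intro z hz'
    have hr' : (0:ℝ) < r := hr
    have h1 : ‖Complex.exp (z * r) * r * (Real.log r : ℂ)‖
        = Real.exp (z.re * r) * r * |Real.log r| := by
      rw [mul_assoc, mul_comm ((r:ℂ)) ((Real.log r : ℂ))]
      rw [← mul_assoc, norm_mul, aux_norm, Complex.norm_real, Real.norm_eq_abs,
        abs_of_pos hr']
      ring
    rw [h1, Real.rpow_one]
    have hmono : Real.exp (z.re * r) ≤ Real.exp (-δ * r) :=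
      Real.exp_le_exp.mpr (mul_le_mul_of_nonneg_right (hre z hz') hr'.le)
    have : Real.exp (z.re * r) * r ≤ Real.exp (-δ * r) * r :=
      mul_le_mul_of_nonneg_right hmono hr'.le
    calc Real.exp (z.re * r) * r * |Real.log r|
        ≤ Real.exp (-δ * r) * r * |Real.log r| :=
          mul_le_mul_of_nonneg_right this (abs_nonneg _)
      _ = r * Real.exp (-δ * r) * |Real.log r| := by ring
  · -- differentiability in z
    rw [ae_restrict_iff' measurableSet_Ioi]
    filter_upwards with r hr
    intro z hz'
    have h1 : HasDerivAt (fun z : ℂ => z * r) (r : ℂ) z := by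
      simpa using (hasDerivAt_id z).mul_const (r : ℂ)
    have h2 : HasDerivAt (fun z : ℂ => Complex.exp (z * r))
        (Complex.exp (z * r) * r) z := h1.cexp
    simpa [mul_comm, mul_assoc] using h2.mul_const ((Real.log r : ℂ))

end stmt2aux

/-- For every nonzero real `φ`, the limit as `ε → 0⁺` of
`∫₀^∞ e^{(iφ − ε) r} log r dr` exists and equals `(γ + Log(−iφ))/(iφ)`. -/
theorem stmt2 (φ : ℝ) (hφ : φ ≠ 0) :
    Filter.Tendsto
      (fun ε : ℝ =>
        ∫ r in Set.Ioi (0 : ℝ), Complex.exp ((Complex.I * φ - ε) * r) * Real.log r)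
      (nhdsWithin 0 (Set.Ioi 0))
      (nhds (((Real.eulerMascheroniConstant : ℂ) + Complex.log (-(Complex.I * φ))) /
        (Complex.I * φ))) := by
  set F : ℂ → ℂ := fun z => ∫ r : ℝ in Ioi 0, Complex.exp (z * r) * (Real.log r : ℂ) with hF
  set g : ℂ → ℂ := fun z =>
    ((Real.eulerMascheroniConstant : ℂ) + Complex.log (-z)) / z with hg
  set U : Set ℂ := {z | z.re < 0} with hU
  have hUopen : IsOpen U := isOpen_lt Complex.continuous_re continuous_const
  have hUconn : IsPreconnected U := (convex_halfSpace_re_lt 0).isPreconnected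
  have hFa : AnalyticOnNhd ℂ F U := by
    apply DifferentiableOn.analyticOnNhd ?_ hUopen
    intro z hz
    exact (F_diff hz).differentiableWithinAt
  have hga : AnalyticOnNhd ℂ g U := by
    apply DifferentiableOn.analyticOnNhd ?_ hUopen
    intro z hz
    have hz' : z.re < 0 := hz
    have hzne : z ≠ 0 := by
      intro h; rw [h] at hz'; simp at hz'
    have hmem : -z ∈ Complex.slitPlane := by
      rw [Complex.mem_slitPlane_iff]
      left; simpa using hz'
    exact (((differentiableAt_const _).add
      ((differentiableAt_id.neg).clog hmem)).div differentiableAt_id hzne).differentiableWithinAt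
  have h₀ : (-1 : ℂ) ∈ U := by simp [hU]
  have hfreq : ∃ᶠ z in nhdsWithin (-1 : ℂ) {(-1 : ℂ)}ᶜ, F z = g z := by
    have htendsto : Tendsto (fun n : ℕ => ((-1 - 1/(n+1) : ℝ) : ℂ)) atTop
        (nhdsWithin (-1 : ℂ) {(-1 : ℂ)}ᶜ) := by
      rw [tendsto_nhdsWithin_iff]
      constructor
      · have : Tendsto (fun n : ℕ => (-1 - 1/(n+1) : ℝ)) atTop (nhds (-1 : ℝ)) := by
          have := tendsto_one_div_add_atTop_nhds_zero_nat (𝕜 := ℝ)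
          have h2 := this.const_sub (-1 : ℝ)
          simpa using h2
        have := (Complex.continuous_ofReal.tendsto (-1 : ℝ)).comp this
        simpa [Function.comp_def] using this
      · filter_upwards with n
        simp only [mem_compl_iff, mem_singleton_iff]
        intro h
        have : (-1 - 1/(n+1) : ℝ) = -1 := by exact_mod_cast h
        have hpos : (0:ℝ) < 1/(n+1) := by positivity
        linarith
    apply htendsto.frequently
    apply Frequently.of_forall
    intro n
    have hx : (-1 - 1/(n+1) : ℝ) < 0 := by
      have hpos : (0:ℝ) < 1/(n+1) := by positivity
      linarith
    exact lemB hx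
  have hEq : EqOn F g U :=
    hFa.eqOn_of_preconnected_of_frequently_eq hga hUconn h₀ hfreq
  have hIφ : Complex.I * φ ≠ 0 :=
    mul_ne_zero Complex.I_ne_zero (Complex.ofReal_ne_zero.mpr hφ)
  have hcont : ContinuousAt g (Complex.I * φ) := by
    apply ContinuousAt.div
    · apply continuousAt_const.add
      have hmem : -(Complex.I * φ) ∈ Complex.slitPlane := by
        rw [Complex.mem_slitPlane_iff]
        right
        simp [hφ]
      exact ContinuousAt.clog continuous_neg.continuousAt hmem
    · exact continuousAt_id
    · exact hIφ
  have hpath : Tendsto (fun ε : ℝ => (Complex.I * φ - ε : ℂ)) (nhdsWithin 0 (Ioi 0))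
      (nhds (Complex.I * φ)) := by
    have : Tendsto (fun ε : ℝ => (Complex.I * φ - ε : ℂ)) (nhds 0) (nhds (Complex.I * φ)) := by
      have h := ((continuous_const (y := Complex.I * (φ:ℂ))).sub
        Complex.continuous_ofReal).tendsto (0 : ℝ)
      simpa only [Pi.sub_def, Complex.ofReal_zero, sub_zero] using h
    exact this.mono_left nhdsWithin_le_nhds
  have hmain : Tendsto (fun ε : ℝ => g (Complex.I * φ - ε)) (nhdsWithin 0 (Ioi 0))
      (nhds (g (Complex.I * φ))) := hcont.tendsto.comp hpath
  have hgval : g (Complex.I * φ)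
      = ((Real.eulerMascheroniConstant : ℂ) + Complex.log (-(Complex.I * φ))) /
        (Complex.I * φ) := rfl
  rw [← hgval]
  apply hmain.congr'
  filter_upwards [self_mem_nhdsWithin] with ε hε
  have hεpos : (0:ℝ) < ε := hε
  have hre : (Complex.I * φ - ε : ℂ).re < 0 := by
    simp [Complex.sub_re, Complex.mul_re]
    linarith
  exact (hEq hre).symm
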